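/- Fix ξ₁ ∈ F₄ \ {0} and let S_{ξ₁} = { [0,ζ₁,...,ζ_m] : ζᵢ ∈ {0,ξ₁} } ⊆ F₂ ⊕ F₄^m. Let S_A, S_B be its even- and odd-weight subsets, fix distinct nonzero ξ₂ ≠ ξ₁, let ν = [1{m even}, ξ₂,...,ξ₂], S_C = ν + S_A and S_D = ν + S_B. Then S_A, S_B, S_C, S_D are pairwise disjoint, each of size 2^{m-1}, and for any i ≠ j in {A,B,C,D} and u ∈ S_i, v ∈ S_j, the Hamming weight of u+v is odd. -/
import Mathlib


def add4 : Fin 4 → Fin 4 → Fin 4 :=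
  ![![0, 1, 2, 3], ![1, 0, 3, 2], ![2, 3, 0, 1], ![3, 2, 1, 0]]

def addV {m : ℕ} (p q : ZMod 2 × (Fin m → Fin 4)) : ZMod 2 × (Fin m → Fin 4) :=
  (p.1 + q.1, fun k => add4 (p.2 k) (q.2 k))

def wtV {m : ℕ} (p : ZMod 2 × (Fin m → Fin 4)) : ℕ :=
  (if p.1 ≠ 0 then 1 else 0) + (Finset.univ.filter fun k => p.2 k ≠ 0).card

/-- S_{ξ₁} = { [0,ζ₁,…,ζ_m] : ζᵢ ∈ {0,ξ₁} }. -/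
def Sxi (m : ℕ) (ξ₁ : Fin 4) : Finset (ZMod 2 × (Fin m → Fin 4)) :=
  Finset.univ.filter fun u => u.1 = 0 ∧ ∀ j, u.2 j = 0 ∨ u.2 j = ξ₁

-- basic add4 facts
lemma add4_self : ∀ a, add4 a a = 0 := by decide
lemma add4_comm : ∀ a b, add4 a b = add4 b a := by decide
lemma add4_assoc : ∀ a b c, add4 (add4 a b) c = add4 a (add4 b c) := by decide
lemma add4_zero_left : ∀ a, add4 0 a = a := by decide

lemma zmod2_even (n : ℕ) : (n : ZMod 2) = 0 ↔ Even n := by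
  rw [ZMod.natCast_eq_zero_iff]; exact (even_iff_two_dvd).symm

lemma mem_Sxi {m : ℕ} {ξ₁ : Fin 4} {u : ZMod 2 × (Fin m → Fin 4)} :
    u ∈ Sxi m ξ₁ ↔ u.1 = 0 ∧ ∀ j, u.2 j = 0 ∨ u.2 j = ξ₁ := by
  simp [Sxi]

lemma addV_cancel {m : ℕ} (ν w : ZMod 2 × (Fin m → Fin 4)) :
    addV ν (addV ν w) = w := by
  unfold addV
  refine Prod.ext ?_ ?_
  · show ν.1 + (ν.1 + w.1) = w.1
    have : ∀ a b : ZMod 2, a + (a + b) = b := by decide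
    exact this _ _
  · funext k
    show add4 (ν.2 k) (add4 (ν.2 k) (w.2 k)) = w.2 k
    rw [← add4_assoc, add4_self, add4_zero_left]

lemma addV_inj {m : ℕ} (ν : ZMod 2 × (Fin m → Fin 4)) :
    Function.Injective (addV ν) := by
  intro a b h
  have := congrArg (addV ν) h
  rwa [addV_cancel, addV_cancel] at this

lemma addV_comm {m : ℕ} (u v : ZMod 2 × (Fin m → Fin 4)) : addV u v = addV v u := by
  unfold addV; exact Prod.ext (add_comm _ _) (funext fun k => add4_comm _ _)

lemma addV_assoc {m : ℕ} (u v w : ZMod 2 × (Fin m → Fin 4)) :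
    addV (addV u v) w = addV u (addV v w) := by
  unfold addV; exact Prod.ext (add_assoc _ _ _) (funext fun k => add4_assoc _ _ _)

-- sum of Sxi elements
lemma Sxi_add {m : ℕ} {ξ₁ : Fin 4} {u v : ZMod 2 × (Fin m → Fin 4)}
    (hu : u ∈ Sxi m ξ₁) (hv : v ∈ Sxi m ξ₁) : addV u v ∈ Sxi m ξ₁ := by
  rw [mem_Sxi] at *
  refine ⟨by simp [addV, hu.1, hv.1], fun j => ?_⟩
  have h1 := hu.2 j; have h2 := hv.2 j
  have : ∀ ξ₁ a b : Fin 4, (a = 0 ∨ a = ξ₁) → (b = 0 ∨ b = ξ₁) →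
      (add4 a b = 0 ∨ add4 a b = ξ₁) := by decide
  exact this ξ₁ _ _ h1 h2

lemma wtV_cast {m : ℕ} (u : ZMod 2 × (Fin m → Fin 4)) :
    (wtV u : ZMod 2) = (if u.1 ≠ 0 then (1 : ZMod 2) else 0)
      + ∑ k : Fin m, (if u.2 k ≠ 0 then (1 : ZMod 2) else 0) := by
  unfold wtV
  rw [Nat.cast_add, Finset.card_filter, Nat.cast_sum]
  congr 1
  · split <;> simp
  · exact Finset.sum_congr rfl (fun k _ => by split <;> simp)

lemma Sxi_add_wt {m : ℕ} {ξ₁ : Fin 4} {u v : ZMod 2 × (Fin m → Fin 4)}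
    (hu : u ∈ Sxi m ξ₁) (hv : v ∈ Sxi m ξ₁) :
    (wtV (addV u v) : ZMod 2) = (wtV u : ℕ) + (wtV v : ℕ) := by
  rw [mem_Sxi] at hu hv
  rw [wtV_cast, wtV_cast, wtV_cast]
  have h1 : (addV u v).1 = 0 := by simp [addV, hu.1, hv.1]
  rw [h1, hu.1, hv.1]
  simp only [ne_eq, not_true_eq_false, if_false]
  simp only [zero_add]
  rw [← Finset.sum_add_distrib]
  refine Finset.sum_congr rfl (fun k _ => ?_)
  have key : ∀ ξ₁ a b : Fin 4, (a = 0 ∨ a = ξ₁) → (b = 0 ∨ b = ξ₁) →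
      (if add4 a b ≠ 0 then (1 : ZMod 2) else 0)
        = (if a ≠ 0 then (1 : ZMod 2) else 0) + (if b ≠ 0 then (1 : ZMod 2) else 0) := by
    decide
  exact key ξ₁ _ _ (hu.2 k) (hv.2 k)

lemma Sxi_add_parity {m : ℕ} {ξ₁ : Fin 4} {u v : ZMod 2 × (Fin m → Fin 4)}
    (hu : u ∈ Sxi m ξ₁) (hv : v ∈ Sxi m ξ₁) (hp : Even (wtV u) ↔ ¬ Even (wtV v)) :
    Odd (wtV (addV u v)) := by
  rw [← Nat.not_even_iff_odd, ← zmod2_even, Sxi_add_wt hu hv]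
  rcases Classical.em (Even (wtV u)) with h | h
  · have h2 : ¬ Even (wtV v) := hp.mp h
    rw [← zmod2_even] at h h2
    intro hc
    rw [h, zero_add] at hc; exact h2 hc
  · have h2 : Even (wtV v) := by by_contra h3; exact h (hp.mpr h3)
    rw [← zmod2_even] at h h2
    intro hc
    rw [h2, add_zero] at hc; exact h hc
-- counting even-card subsets
lemma card_even_subsets (m : ℕ) (hm : 1 ≤ m) :
    ((Finset.univ : Finset (Finset (Fin m))).filter fun s => Even s.card).card
      = 2 ^ (m - 1) ∧
    ((Finset.univ : Finset (Finset (Fin m))).filter fun s => ¬ Even s.card).card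
      = 2 ^ (m - 1) := by
  set i0 : Fin m := ⟨0, hm⟩
  set E := (Finset.univ : Finset (Finset (Fin m))).filter fun s => Even s.card with hE
  set O := (Finset.univ : Finset (Finset (Fin m))).filter fun s => ¬ Even s.card with hO
  have key : ∀ s : Finset (Fin m),
      (if i0 ∈ s then s.erase i0 else insert i0 s).card
        = (if i0 ∈ s then s.card - 1 else s.card + 1) ∧
      (i0 ∈ s → 1 ≤ s.card) := by
    intro s
    constructor
    · split
      · next h => rw [Finset.card_erase_of_mem h]
      · next h => rw [Finset.card_insert_of_notMem h]
    · intro h; exact Finset.card_pos.mpr ⟨i0, h⟩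
  have flip_parity : ∀ s : Finset (Fin m), Even s.card ↔
      ¬ Even (if i0 ∈ s then s.erase i0 else insert i0 s).card := by
    intro s
    rcases key s with ⟨hc, hpos⟩
    rw [hc]
    split
    · next h =>
        have h1 := hpos h
        rw [Nat.even_sub h1]
        simp only [Nat.even_iff] at *
        omega
    · next h => simp [Nat.even_add_one]
  have flip_inv : ∀ s : Finset (Fin m),
      (let t := if i0 ∈ s then s.erase i0 else insert i0 s;
        (if i0 ∈ t then t.erase i0 else insert i0 t)) = s := by
    intro s
    by_cases h : i0 ∈ s
    · simp [h, Finset.insert_erase h]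
    · simp [h, Finset.erase_insert h]
  have hEO : E.card = O.card := by
    refine Finset.card_bij' (fun s _ => if i0 ∈ s then s.erase i0 else insert i0 s)
      (fun s _ => if i0 ∈ s then s.erase i0 else insert i0 s) ?_ ?_ ?_ ?_
    · intro s hs
      simp only [hE, hO, Finset.mem_filter, Finset.mem_univ, true_and] at hs ⊢
      exact (flip_parity s).mp hs
    · intro s hs
      simp only [hE, hO, Finset.mem_filter, Finset.mem_univ, true_and] at hs ⊢
      by_contra hc
      exact hs ((flip_parity s).mpr hc)
    · intro s _; simpa using flip_inv s
    · intro s _; simpa using flip_inv s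
  have hsum : E.card + O.card = 2 ^ m := by
    rw [hE, hO, Finset.card_filter_add_card_filter_not]
    simp [Finset.card_univ]
  have h2 : 2 ^ m = 2 * 2 ^ (m - 1) := by
    rw [← pow_succ']; congr 1; omega
  omega

def enc (m : ℕ) (ξ₁ : Fin 4) (s : Finset (Fin m)) : ZMod 2 × (Fin m → Fin 4) :=
  (0, fun j => if j ∈ s then ξ₁ else 0)

lemma enc_mem {m : ℕ} {ξ₁ : Fin 4} (s : Finset (Fin m)) : enc m ξ₁ s ∈ Sxi m ξ₁ := by
  rw [mem_Sxi]
  refine ⟨rfl, fun j => ?_⟩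
  by_cases h : j ∈ s <;> simp [enc, h]

lemma enc_inj {m : ℕ} {ξ₁ : Fin 4} (h₁ : ξ₁ ≠ 0) : Function.Injective (enc m ξ₁) := by
  intro s t h
  ext j
  have := congrFun (congrArg Prod.snd h) j
  simp only [enc] at this
  by_cases hs : j ∈ s <;> by_cases ht : j ∈ t <;> simp [hs, ht] at this ⊢
  · exact h₁ this
  · exact h₁ this.symm

lemma wtV_enc {m : ℕ} {ξ₁ : Fin 4} (h₁ : ξ₁ ≠ 0) (s : Finset (Fin m)) :
    wtV (enc m ξ₁ s) = s.card := by
  unfold wtV enc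
  rw [if_neg (by simp), zero_add]
  rw [show s.card = (Finset.univ.filter (fun j => j ∈ s)).card by simp]
  congr 1
  ext j
  by_cases h : j ∈ s <;> simp [h, h₁]

lemma Sxi_eq_image {m : ℕ} {ξ₁ : Fin 4} (h₁ : ξ₁ ≠ 0) :
    Sxi m ξ₁ = (Finset.univ : Finset (Finset (Fin m))).image (enc m ξ₁) := by
  ext u
  simp only [Finset.mem_image, Finset.mem_univ, true_and]
  constructor
  · intro hu
    rw [mem_Sxi] at hu
    refine ⟨Finset.univ.filter (fun j => u.2 j = ξ₁), ?_⟩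
    refine Prod.ext hu.1.symm ?_
    funext j
    rcases hu.2 j with h | h <;> simp [enc, h, Ne.symm h₁]
  · rintro ⟨s, rfl⟩; exact enc_mem s

lemma addV_rearrange {m : ℕ} (a b c : ZMod 2 × (Fin m → Fin 4)) :
    addV (addV a b) (addV a c) = addV b c := by
  rw [addV_assoc, ← addV_assoc b a, addV_comm b a, addV_assoc a b, ← addV_assoc a a,
    addV_assoc, addV_cancel]

lemma coordsC : ∀ ξ₁ ξ₂ a : Fin 4, ξ₁ ≠ 0 → ξ₂ ≠ 0 → ξ₁ ≠ ξ₂ → (a = 0 ∨ a = ξ₁) →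
    add4 ξ₂ a ≠ 0 ∧ add4 ξ₂ a ≠ ξ₁ := by decide

lemma odd_const (m : ℕ) : Odd ((if Even m then 1 else 0) + m) := by
  rcases Nat.even_or_odd m with h | h
  · rw [if_pos h, Nat.odd_iff, Nat.even_iff] at *; omega
  · rw [if_neg (by rwa [Nat.not_even_iff_odd])]; simpa using h

lemma cardSxi_filters {m : ℕ} {ξ₁ : Fin 4} (hm : 1 ≤ m) (h₁ : ξ₁ ≠ 0) :
    ((Sxi m ξ₁).filter fun u => Even (wtV u)).card = 2 ^ (m - 1) ∧
    ((Sxi m ξ₁).filter fun u => Odd (wtV u)).card = 2 ^ (m - 1) := by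
  have himg : ∀ p : ℕ → Prop, ∀ _ : DecidablePred p,
      (Sxi m ξ₁).filter (fun u => p (wtV u)) =
        ((Finset.univ : Finset (Finset (Fin m))).filter (fun s => p s.card)).image (enc m ξ₁) := by
    intro p _
    ext u
    simp only [Finset.mem_filter, Finset.mem_image, Finset.mem_univ, true_and,
      Sxi_eq_image h₁ (m := m), Finset.mem_image, Finset.mem_univ, true_and]
    constructor
    · rintro ⟨⟨s, rfl⟩, hp⟩
      exact ⟨s, by rwa [wtV_enc h₁ s] at hp, rfl⟩
    · rintro ⟨s, hp, rfl⟩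
      exact ⟨⟨s, rfl⟩, by rwa [wtV_enc h₁ s]⟩
  rcases card_even_subsets m hm with ⟨hE, hO⟩
  constructor
  · rw [himg (fun n => Even n) _, Finset.card_image_of_injective _ (enc_inj h₁), hE]
  · rw [himg (fun n => Odd n) _, Finset.card_image_of_injective _ (enc_inj h₁), ← hO]
    congr 1
    apply Finset.filter_congr
    intro s _
    simp [Nat.not_even_iff_odd]


theorem rate54_four_group (m : ℕ) (hm : 1 ≤ m)
    (ξ₁ ξ₂ : Fin 4) (h₁ : ξ₁ ≠ 0) (h₂ : ξ₂ ≠ 0) (h₁₂ : ξ₁ ≠ ξ₂) :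
    let SA := (Sxi m ξ₁).filter fun u => Even (wtV u)
    let SB := (Sxi m ξ₁).filter fun u => Odd (wtV u)
    let ν : ZMod 2 × (Fin m → Fin 4) :=
      ((if Even m then 1 else 0), fun _ => ξ₂)
    let SC := SA.image (addV ν)
    let SD := SB.image (addV ν)
    let T : Fin 4 → Finset (ZMod 2 × (Fin m → Fin 4)) := ![SA, SB, SC, SD]
    (∀ i j, i ≠ j → Disjoint (T i) (T j)) ∧
    (∀ i, (T i).card = 2 ^ (m - 1)) ∧
    (∀ i j, i ≠ j → ∀ u ∈ T i, ∀ v ∈ T j, Odd (wtV (addV u v))) := by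
  intro SA SB ν SC SD T
  have hSA : ∀ u ∈ SA, u ∈ Sxi m ξ₁ ∧ Even (wtV u) := fun u hu => Finset.mem_filter.mp hu
  have hSB : ∀ u ∈ SB, u ∈ Sxi m ξ₁ ∧ Odd (wtV u) := fun u hu => Finset.mem_filter.mp hu
  have hSC : ∀ u ∈ SC, ∃ w, (w ∈ Sxi m ξ₁ ∧ Even (wtV w)) ∧ addV ν w = u := by
    intro u hu
    rcases Finset.mem_image.mp hu with ⟨w, hw, rfl⟩
    exact ⟨w, hSA w hw, rfl⟩
  have hSD : ∀ u ∈ SD, ∃ w, (w ∈ Sxi m ξ₁ ∧ Odd (wtV w)) ∧ addV ν w = u := by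
    intro u hu
    rcases Finset.mem_image.mp hu with ⟨w, hw, rfl⟩
    exact ⟨w, hSB w hw, rfl⟩
  -- weight of ν + w
  have hwtν : ∀ w ∈ Sxi m ξ₁, wtV (addV ν w) = (if Even m then 1 else 0) + m := by
    intro w hw
    rw [mem_Sxi] at hw
    unfold wtV addV
    have h1 : ν.1 + w.1 = (if Even m then (1 : ZMod 2) else 0) := by
      rw [hw.1, add_zero]
    rw [h1]
    congr 1
    · by_cases h : Even m <;> simp [h]
    · have : ∀ k : Fin m, ¬ add4 (ν.2 k) (w.2 k) = 0 := by
        intro k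
        exact (coordsC ξ₁ ξ₂ (w.2 k) h₁ h₂ h₁₂ (hw.2 k)).1
      rw [Finset.filter_true_of_mem (fun k _ => this k)]
      simp
  -- ν + w never lies in Sxi (coordinate 0 obstruction)
  have hνnot : ∀ w ∈ Sxi m ξ₁, addV ν w ∉ Sxi m ξ₁ := by
    intro w hw hc
    rw [mem_Sxi] at hw hc
    have h0 := hc.2 ⟨0, hm⟩
    have := coordsC ξ₁ ξ₂ (w.2 ⟨0, hm⟩) h₁ h₂ h₁₂ ((mem_Sxi.mp (by rw [mem_Sxi]; exact hw)).2 ⟨0, hm⟩)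
    rcases h0 with h0 | h0 <;> simp [addV] at h0
    · exact this.1 h0
    · exact this.2 h0
  -- disjointness facts
  have dAB : Disjoint SA SB := by
    rw [Finset.disjoint_left]
    intro u huA huB
    exact (Nat.not_even_iff_odd.mpr (hSB u huB).2) (hSA u huA).2
  have dXC : ∀ u ∈ Sxi m ξ₁, ∀ S' ∈ [SC, SD], u ∉ S' := by
    intro u hu S' hS' hc
    have : ∃ w, w ∈ Sxi m ξ₁ ∧ addV ν w = u := by
      rcases List.mem_pair.mp hS' with rfl | rfl
      · rcases hSC u hc with ⟨w, hw, h⟩; exact ⟨w, hw.1, h⟩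
      · rcases hSD u hc with ⟨w, hw, h⟩; exact ⟨w, hw.1, h⟩
    rcases this with ⟨w, hw, rfl⟩
    exact hνnot w hw hu
  have dAC : Disjoint SA SC := by
    rw [Finset.disjoint_left]; intro u hu hu'
    exact dXC u (hSA u hu).1 SC (by simp) hu'
  have dAD : Disjoint SA SD := by
    rw [Finset.disjoint_left]; intro u hu hu'
    exact dXC u (hSA u hu).1 SD (by simp) hu'
  have dBC : Disjoint SB SC := by
    rw [Finset.disjoint_left]; intro u hu hu'
    exact dXC u (hSB u hu).1 SC (by simp) hu'
  have dBD : Disjoint SB SD := by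
    rw [Finset.disjoint_left]; intro u hu hu'
    exact dXC u (hSB u hu).1 SD (by simp) hu'
  have dCD : Disjoint SC SD := by
    rw [Finset.disjoint_left]
    intro u huC huD
    rcases hSC u huC with ⟨w₁, hw₁, he₁⟩
    rcases hSD u huD with ⟨w₂, hw₂, he₂⟩
    have : w₁ = w₂ := addV_inj ν (he₁.trans he₂.symm)
    subst this
    exact (Nat.not_even_iff_odd.mpr hw₂.2) hw₁.2
  -- cards
  rcases cardSxi_filters hm h₁ with ⟨cA, cB⟩
  have cC : SC.card = 2 ^ (m - 1) := by
    rw [Finset.card_image_of_injective _ (addV_inj ν)]; exact cA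
  have cD : SD.card = 2 ^ (m - 1) := by
    rw [Finset.card_image_of_injective _ (addV_inj ν)]; exact cB
  -- odd-weight facts
  have oAB : ∀ u v, u ∈ Sxi m ξ₁ → v ∈ Sxi m ξ₁ → (Even (wtV u) ↔ ¬ Even (wtV v)) →
      Odd (wtV (addV u v)) := fun u v hu hv hp => Sxi_add_parity hu hv hp
  have oXC : ∀ u ∈ Sxi m ξ₁, ∀ w ∈ Sxi m ξ₁, Odd (wtV (addV u (addV ν w))) := by
    intro u hu w hw
    have he : addV u (addV ν w) = addV ν (addV u w) := by
      rw [← addV_assoc, addV_comm u ν, addV_assoc]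
    rw [he, hwtν _ (Sxi_add hu hw)]
    exact odd_const m
  have oCX : ∀ u ∈ Sxi m ξ₁, ∀ w ∈ Sxi m ξ₁, Odd (wtV (addV (addV ν w) u)) := by
    intro u hu w hw
    rw [addV_comm]
    exact oXC u hu w hw
  have oCD : ∀ w₁ w₂, w₁ ∈ Sxi m ξ₁ → w₂ ∈ Sxi m ξ₁ → (Even (wtV w₁) ↔ ¬ Even (wtV w₂)) →
      Odd (wtV (addV (addV ν w₁) (addV ν w₂))) := by
    intro w₁ w₂ hw₁ hw₂ hp
    rw [addV_rearrange]
    exact Sxi_add_parity hw₁ hw₂ hp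
  have hpAB : ∀ a b : ℕ, Even a → Odd b → (Even a ↔ ¬ Even b) :=
    fun a b ha hb => iff_of_true ha (Nat.not_even_iff_odd.mpr hb)
  have hpBA : ∀ a b : ℕ, Odd a → Even b → (Even a ↔ ¬ Even b) :=
    fun a b ha hb => iff_of_false (Nat.not_even_iff_odd.mpr ha) (not_not_intro hb)
  have hT0 : T 0 = SA := rfl
  have hT1 : T 1 = SB := rfl
  have hT2 : T 2 = SC := rfl
  have hT3 : T 3 = SD := rfl
  refine ⟨?_, ?_, ?_⟩
  · intro i j hij
    fin_cases i <;> fin_cases j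
    · exact absurd rfl hij
    · exact dAB
    · exact dAC
    · exact dAD
    · exact dAB.symm
    · exact absurd rfl hij
    · exact dBC
    · exact dBD
    · exact dAC.symm
    · exact dBC.symm
    · exact absurd rfl hij
    · exact dCD
    · exact dAD.symm
    · exact dBD.symm
    · exact dCD.symm
    · exact absurd rfl hij
  · intro i
    fin_cases i
    · exact cA
    · exact cB
    · exact cC
    · exact cD
  · intro i j hij u hu v hv
    fin_cases i <;> fin_cases j
    · exact absurd rfl hij
    · exact oAB u v (hSA u hu).1 (hSB v hv).1 (hpAB _ _ (hSA u hu).2 (hSB v hv).2)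
    · obtain ⟨w, hw, rfl⟩ := hSC v hv; exact oXC u (hSA u hu).1 w hw.1
    · obtain ⟨w, hw, rfl⟩ := hSD v hv; exact oXC u (hSA u hu).1 w hw.1
    · exact oAB u v (hSB u hu).1 (hSA v hv).1 (hpBA _ _ (hSB u hu).2 (hSA v hv).2)
    · exact absurd rfl hij
    · obtain ⟨w, hw, rfl⟩ := hSC v hv; exact oXC u (hSB u hu).1 w hw.1
    · obtain ⟨w, hw, rfl⟩ := hSD v hv; exact oXC u (hSB u hu).1 w hw.1
    · obtain ⟨w, hw, rfl⟩ := hSC u hu; exact oCX v (hSA v hv).1 w hw.1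
    · obtain ⟨w, hw, rfl⟩ := hSC u hu; exact oCX v (hSB v hv).1 w hw.1
    · exact absurd rfl hij
    · obtain ⟨w₁, hw₁, rfl⟩ := hSC u hu; obtain ⟨w₂, hw₂, rfl⟩ := hSD v hv;
      exact oCD w₁ w₂ hw₁.1 hw₂.1 (hpAB _ _ hw₁.2 hw₂.2)
    · obtain ⟨w, hw, rfl⟩ := hSD u hu; exact oCX v (hSA v hv).1 w hw.1
    · obtain ⟨w, hw, rfl⟩ := hSD u hu; exact oCX v (hSB v hv).1 w hw.1
    · obtain ⟨w₁, hw₁, rfl⟩ := hSD u hu; obtain ⟨w₂, hw₂, rfl⟩ := hSC v hv;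
      exact oCD w₁ w₂ hw₁.1 hw₂.1 (hpBA _ _ hw₁.2 hw₂.2)
    · exact absurd rfl hij
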